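/- Let B ∈ ℝ^{n×m}, C ∈ ℝ^{p×n}, E ∈ ℝ^{n×r} with rank(C·E) = rank(E) = r, and let D ∈ ℝ^{n×p} satisfy (I_n − D·C)·E = 0 and rank(D) = r. Then the n×(m+r) matrix [C·B C·E] has rank m + r if and only if the p×m matrix C·(I_n − D·C)·B has full column rank m. -/

import Mathlib

open Matrix

lemma rank_eq_card_iff_inj {p q : Type*} [Fintype p] [Fintype q] [DecidableEq q]
    (A : Matrix p q ℝ) :
    A.rank = Fintype.card q ↔ Function.Injective A.mulVecLin := by
  rw [← LinearMap.ker_eq_bot]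
  have h := LinearMap.finrank_range_add_finrank_ker A.mulVecLin
  rw [Module.finrank_fintype_fun_eq_card] at h
  constructor
  · intro hr
    rw [Matrix.rank] at hr
    have : Module.finrank ℝ (LinearMap.ker A.mulVecLin) = 0 := by omega
    exact Submodule.finrank_eq_zero.mp this
  · intro hk
    rw [Matrix.rank]
    rw [hk] at h
    simpa using h

/-- [C·B  C·E] has rank m+r iff C·(I − D·C)·B has full column rank m,
given rank(CE) = rank(E) = r, (I − D·C)·E = 0 and rank(D) = r. -/
theorem stmt_6 {n m p r : ℕ}
    (B : Matrix (Fin n) (Fin m) ℝ) (C : Matrix (Fin p) (Fin n) ℝ)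
    (E : Matrix (Fin n) (Fin r) ℝ)
    (hCE : (C * E).rank = r) (hE : E.rank = r)
    (D : Matrix (Fin n) (Fin p) ℝ)
    (hD1 : (1 - D * C) * E = 0) (hD2 : D.rank = r) :
    (Matrix.fromCols (C * B) (C * E)).rank = m + r ↔
      (C * ((1 - D * C) * B)).rank = m := by
  -- basic identity: D * (C * E) = E
  have hDCE : D * (C * E) = E := by
    have := hD1
    rw [Matrix.sub_mul, Matrix.one_mul, sub_eq_zero] at this
    rw [← Matrix.mul_assoc, ← this]
  -- range of D = range of E
  have hrange : LinearMap.range E.mulVecLin = LinearMap.range D.mulVecLin := by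
    have hle : LinearMap.range E.mulVecLin ≤ LinearMap.range D.mulVecLin := by
      rw [← hDCE, Matrix.mulVecLin_mul]
      exact LinearMap.range_comp_le_range _ _
    refine Submodule.eq_of_le_of_finrank_eq hle ?_
    show Matrix.rank E = Matrix.rank D
    rw [hE, hD2]
  -- injectivity of CE
  have injCE : Function.Injective (C * E).mulVecLin := by
    rw [← rank_eq_card_iff_inj]
    simpa using hCE
  have hcard : Fintype.card (Fin m ⊕ Fin r) = m + r := by simp
  have L1 : (Matrix.fromCols (C * B) (C * E)).rank = m + r ↔
      Function.Injective (Matrix.fromCols (C * B) (C * E)).mulVecLin := by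
    rw [← hcard]; exact rank_eq_card_iff_inj _
  have L2 := rank_eq_card_iff_inj (C * ((1 - D * C) * B))
  rw [Fintype.card_fin] at L2
  rw [L1, L2]
  have M1 : C * ((1 - D * C) * B) = C * B - C * (D * (C * B)) := by
    rw [Matrix.sub_mul, Matrix.one_mul, Matrix.mul_sub, Matrix.mul_assoc]
  have M2 : (1 - C * D) * (C * E) = 0 := by
    rw [Matrix.sub_mul, Matrix.one_mul, Matrix.mul_assoc, hDCE, sub_self]
  have M3 : (1 - C * D) * (C * B) = C * ((1 - D * C) * B) := by
    rw [M1, Matrix.sub_mul, Matrix.one_mul, Matrix.mul_assoc]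
  constructor
  · intro hinj
    rw [injective_iff_map_eq_zero]
    intro u hu
    rw [Matrix.mulVecLin_apply] at hu
    have hexp : (C * B) *ᵥ u = (C * (D * (C * B))) *ᵥ u := by
      rw [M1, Matrix.sub_mulVec, sub_eq_zero] at hu
      exact hu
    have hmem : D.mulVecLin ((C * B) *ᵥ u) ∈ LinearMap.range E.mulVecLin := by
      rw [hrange]; exact LinearMap.mem_range_self _ _
    obtain ⟨a, ha⟩ := hmem
    rw [Matrix.mulVecLin_apply, Matrix.mulVecLin_apply] at ha
    have hCEa : (C * E) *ᵥ a = (C * B) *ᵥ u := by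
      calc (C * E) *ᵥ a = C *ᵥ (E *ᵥ a) := (Matrix.mulVec_mulVec _ _ _).symm
        _ = C *ᵥ (D *ᵥ ((C * B) *ᵥ u)) := by rw [ha]
        _ = (C * (D * (C * B))) *ᵥ u := by
            rw [Matrix.mulVec_mulVec, Matrix.mulVec_mulVec, Matrix.mul_assoc]
        _ = (C * B) *ᵥ u := hexp.symm
    have key : Matrix.fromCols (C * B) (C * E) *ᵥ (Sum.elim u (-a)) = 0 := by
      rw [Matrix.fromCols_mulVec_sumElim, Matrix.mulVec_neg, hCEa]
      simp
    have hz : Sum.elim u (-a) = 0 := by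
      apply hinj
      simpa [Matrix.mulVecLin_apply] using key
    funext i
    simpa using congrFun hz (Sum.inl i)
  · intro hinj
    rw [injective_iff_map_eq_zero]
    intro v hv
    rw [Matrix.mulVecLin_apply] at hv
    set u := v ∘ Sum.inl with hu
    set w := v ∘ Sum.inr with hw
    have hv' : Sum.elim u w = v := by
      funext i; cases i <;> rfl
    rw [← hv', Matrix.fromCols_mulVec_sumElim] at hv
    have h1 : (1 - C * D) *ᵥ ((C * E) *ᵥ w) = 0 := by
      rw [Matrix.mulVec_mulVec, M2, Matrix.zero_mulVec]
    have h2 : (1 - C * D) *ᵥ ((C * B) *ᵥ u) = (C * ((1 - D * C) * B)) *ᵥ u := by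
      rw [Matrix.mulVec_mulVec, M3]
    have hu0 : u = 0 := by
      apply hinj
      have := congrArg (fun x => (1 - C * D) *ᵥ x) hv
      simp only [Matrix.mulVec_add, h1, h2, add_zero, Matrix.mulVec_zero] at this
      simpa only [Matrix.mulVecLin_apply, Matrix.mulVec_zero] using this
    have hw0 : w = 0 := by
      apply injCE
      rw [hu0, Matrix.mulVec_zero, zero_add] at hv
      simpa [Matrix.mulVecLin_apply] using hv
    funext i
    cases i with
    | inl i => exact congrFun hu0 i
    | inr i => exact congrFun hw0 i
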